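/- arXiv:2212.00396 — 2 statements merged into one kernel-verified Lean document; each statement's English description precedes it below -/
import Mathlib

section
/- Let T : S × Z → S be a continuous map on a compact metric space S (the state space) such that for some fixed 0 ≤ r < 1, dist(T(x,z), T(y,z)) ≤ r · dist(x,y) for all x, y ∈ S and all z ∈ Z. Then for every bi-infinite input sequence z : ℤ → Z there exists a unique sequence x : ℤ → S with x(t) = T(x(t-1), z(t)) for all t ∈ ℤ (the echo state property). -/
private def chainAux {S Z : Type*} (T : S → Z → S) (z : ℤ → Z) (s₀ : S) :
    ℕ → ℤ → S
  | 0, _ => s₀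
  | n + 1, t => T (chainAux T z s₀ n (t - 1)) (z t)

theorem stmt_5 {S Z : Type*} [MetricSpace S] [CompactSpace S] [Nonempty S]
    (T : S → Z → S) (r : ℝ) (hr0 : 0 ≤ r) (hr1 : r < 1)
    (hcontr : ∀ (x y : S) (z : Z), dist (T x z) (T y z) ≤ r * dist x y) :
    ∀ z : ℤ → Z, ∃! x : ℤ → S, ∀ t : ℤ, x t = T (x (t - 1)) (z t) := by
  -- global bound on distances
  obtain ⟨C, hC⟩ : ∃ C, ∀ a b : S, dist a b ≤ C := by
    obtain ⟨C, hC⟩ := Metric.isBounded_iff.1 (isCompact_univ (X := S)).isBounded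
    exact ⟨C, fun a b => hC (Set.mem_univ a) (Set.mem_univ b)⟩
  have hTcont : ∀ w : Z, Continuous (fun s : S => T s w) := fun w =>
    (LipschitzWith.of_dist_le_mul (K := ⟨r, hr0⟩) (fun a b => hcontr a b w)).continuous
  have hgeo : Filter.Tendsto (fun n : ℕ => r ^ n * C) Filter.atTop (nhds 0) := by
    simpa using (tendsto_pow_atTop_nhds_zero_of_lt_one hr0 hr1).mul_const C
  intro z
  obtain ⟨s₀⟩ := ‹Nonempty S›
  set F := chainAux T z s₀ with hF
  -- Cauchy estimate
  have key : ∀ n : ℕ, ∀ t : ℤ, dist (F (n + 1) t) (F n t) ≤ r ^ n * C := by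
    intro n
    induction n with
    | zero => intro t; simpa [hF, chainAux] using hC (T s₀ (z t)) s₀
    | succ n ih =>
      intro t
      have : dist (F (n + 2) t) (F (n + 1) t) ≤ r * dist (F (n + 1) (t - 1)) (F n (t - 1)) := by
        simpa [hF, chainAux] using hcontr (F (n + 1) (t - 1)) (F n (t - 1)) (z t)
      calc dist (F (n + 2) t) (F (n + 1) t)
          ≤ r * dist (F (n + 1) (t - 1)) (F n (t - 1)) := this
        _ ≤ r * (r ^ n * C) := by
            exact mul_le_mul_of_nonneg_left (ih (t - 1)) hr0
        _ = r ^ (n + 1) * C := by ring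
  -- limits exist
  have hCauchy : ∀ t : ℤ, ∃ l : S, Filter.Tendsto (fun n => F n t) Filter.atTop (nhds l) := by
    intro t
    refine cauchySeq_tendsto_of_complete ?_
    exact cauchySeq_of_le_geometric r C hr1 (fun n => by
      simpa [dist_comm, mul_comm] using key n t)
  choose x hx using hCauchy
  refine ⟨x, ?_, ?_⟩
  · intro t
    have h1 : Filter.Tendsto (fun n => F (n + 1) t) Filter.atTop (nhds (x t)) :=
      (hx t).comp (Filter.tendsto_add_atTop_nat 1)
    have h2 : Filter.Tendsto (fun n => F (n + 1) t) Filter.atTop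
        (nhds (T (x (t - 1)) (z t))) := by
      have : Filter.Tendsto (fun n => T (F n (t - 1)) (z t)) Filter.atTop
          (nhds (T (x (t - 1)) (z t))) :=
        ((hTcont (z t)).tendsto _).comp (hx (t - 1))
      simpa [hF, chainAux] using this
    exact tendsto_nhds_unique h1 h2
  · intro y hy
    -- uniqueness
    have hb : ∀ n : ℕ, ∀ t : ℤ, dist (y t) (x t) ≤ r ^ n * C := by
      intro n
      induction n with
      | zero => intro t; simpa using hC (y t) (x t)
      | succ n ih =>
        intro t
        have hx' : x t = T (x (t - 1)) (z t) := by
          have h1 : Filter.Tendsto (fun n => F (n + 1) t) Filter.atTop (nhds (x t)) :=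
            (hx t).comp (Filter.tendsto_add_atTop_nat 1)
          have h2 : Filter.Tendsto (fun n => F (n + 1) t) Filter.atTop
              (nhds (T (x (t - 1)) (z t))) := by
            have : Filter.Tendsto (fun n => T (F n (t - 1)) (z t)) Filter.atTop
                (nhds (T (x (t - 1)) (z t))) :=
              ((hTcont (z t)).tendsto _).comp (hx (t - 1))
            simpa [hF, chainAux] using this
          exact tendsto_nhds_unique h1 h2
        calc dist (y t) (x t) = dist (T (y (t - 1)) (z t)) (T (x (t - 1)) (z t)) := by
              rw [← hy t, ← hx']
          _ ≤ r * dist (y (t - 1)) (x (t - 1)) := hcontr _ _ _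
          _ ≤ r * (r ^ n * C) := mul_le_mul_of_nonneg_left (ih (t - 1)) hr0
          _ = r ^ (n + 1) * C := by ring
    funext t
    have : dist (y t) (x t) ≤ 0 := ge_of_tendsto' hgeo (fun n => hb n t)
    exact dist_le_zero.1 this
end

section
/- Let T be a linear map on d×d complex matrices that is trace-preserving and positivity-preserving (maps positive semidefinite to positive semidefinite). Then T maps the set of density matrices into itself, and T has at least one fixed point that is a density matrix. -/
open Matrix ComplexOrder Filter Topology

namespace Stmt12Aux

lemma psd_add {d : ℕ} {A B : Matrix (Fin d) (Fin d) ℂ} (hA : A.PosSemidef) (hB : B.PosSemidef) :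
    (A + B).PosSemidef := by
  refine PosSemidef.of_dotProduct_mulVec_nonneg (hA.1.add hB.1) fun x => ?_
  rw [add_mulVec, dotProduct_add]
  exact add_nonneg (hA.dotProduct_mulVec_nonneg x) (hB.dotProduct_mulVec_nonneg x)

lemma psd_smul {d : ℕ} {A : Matrix (Fin d) (Fin d) ℂ} (hA : A.PosSemidef) {c : ℝ} (hc : 0 ≤ c) :
    ((c : ℂ) • A).PosSemidef := by
  refine PosSemidef.of_dotProduct_mulVec_nonneg ?_ fun x => ?_
  · unfold Matrix.IsHermitian
    rw [conjTranspose_smul, hA.1]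
    simp
  · rw [smul_mulVec, dotProduct_smul, smul_eq_mul]
    exact mul_nonneg (by exact_mod_cast hc) (hA.dotProduct_mulVec_nonneg x)


lemma diag_nn {d : ℕ} {A : Matrix (Fin d) (Fin d) ℂ} (hA : A.PosSemidef) (i : Fin d) :
    0 ≤ A i i := by
  have := hA.dotProduct_mulVec_nonneg (Pi.single i 1)
  simpa [← Pi.single_star, single_dotProduct] using this

lemma offdiag_bound {d : ℕ} {A : Matrix (Fin d) (Fin d) ℂ} (hA : A.PosSemidef) {i j : Fin d}
    (hij : i ≠ j) : 2 * ‖A i j‖ ≤ (A i i).re + (A j j).re := by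
  set a := A i j with ha
  rcases eq_or_ne a 0 with h0 | h0
  · have hi := diag_nn hA i
    have hj := diag_nn hA j
    rw [Complex.nonneg_iff] at hi hj
    simp [h0]
    linarith [hi.1, hj.1]
  · set r : ℝ := ‖a‖ with hr
    have hrpos : 0 < r := norm_pos_iff.2 h0
    have hrC : (r : ℂ) ≠ 0 := by exact_mod_cast hrpos.ne'
    set c : ℂ := -a / (r : ℂ) with hc
    have hq := hA.dotProduct_mulVec_nonneg (Pi.single i c + Pi.single j 1)
    have hji : A j i = star a := by
      rw [ha, ← hA.1.apply i j]
      simp [conjTranspose_apply]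
    have hexp : star (Pi.single i c + Pi.single j 1) ⬝ᵥ A *ᵥ (Pi.single i c + Pi.single j 1)
        = star c * (A i i * c) + star c * (A i j * 1) + (A j i * c) + (A j j * 1) := by
      rw [star_add, ← Pi.single_star, ← Pi.single_star, star_one]
      rw [mulVec_add, dotProduct_add, add_dotProduct, add_dotProduct]
      simp only [single_dotProduct, one_mul]
      have h1 : ∀ k, (A *ᵥ Pi.single i c) k = A k i * c := by
        intro k; simp [mulVec, dotProduct_single]
      have h2 : ∀ k, (A *ᵥ Pi.single j (1:ℂ)) k = A k j * 1 := by
        intro k; simp [mulVec, dotProduct_single]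
      rw [h1 i, h1 j, h2 i, h2 j, hji]
      ring_nf
    rw [hexp] at hq
    have hsaa : star a * a = ((r : ℂ))^2 := by
      rw [Complex.star_def, ← Complex.normSq_eq_conj_mul_self]
      rw [Complex.normSq_eq_norm_sq, ← hr]
      push_cast
      ring
    have hcc : star c * c = 1 := by
      rw [hc]
      have : star (-a / (r:ℂ)) = -(star a) / (r:ℂ) := by
        rw [star_div₀, star_neg]
        congr 1
        simp [Complex.star_def, Complex.conj_ofReal]
      rw [this, div_mul_div_comm, neg_mul_neg, hsaa]
      field_simp
    have hca : star c * a = -(r : ℂ) := by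
      rw [hc]
      have : star (-a / (r:ℂ)) = -(star a) / (r:ℂ) := by
        rw [star_div₀, star_neg]
        congr 1
        simp [Complex.star_def, Complex.conj_ofReal]
      rw [this, div_mul_eq_mul_div, neg_mul, hsaa]
      field_simp
    have hac : star a * c = -(r : ℂ) := by
      rw [hc]
      rw [mul_div_assoc']
      rw [mul_neg, hsaa]
      field_simp
    have hq2 : (0:ℂ) ≤ A i i + A j j - 2 * (r : ℂ) := by
      have : star c * (A i i * c) + star c * (A i j * 1) + (A j i * c) + (A j j * 1)
          = A i i * (star c * c) + star c * a + star a * c + A j j := by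
        rw [hji, ha]; ring
      rw [this, hcc, hca, hac] at hq
      convert hq using 1
      ring
    rw [Complex.nonneg_iff] at hq2
    have := hq2.1
    simp at this
    linarith


lemma diag_re_sum {d : ℕ} {A : Matrix (Fin d) (Fin d) ℂ} (ht : A.trace = 1) :
    ∑ k : Fin d, (A k k).re = 1 := by
  have : (A.trace).re = 1 := by rw [ht]; simp
  rw [Matrix.trace] at this
  simpa [Matrix.diag, Complex.re_sum] using this

lemma entry_norm_le {d : ℕ} {A : Matrix (Fin d) (Fin d) ℂ} (hA : A.PosSemidef)
    (ht : A.trace = 1) (i j : Fin d) : ‖A i j‖ ≤ 1 := by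
  have hdr : ∀ k, 0 ≤ (A k k).re ∧ (A k k).im = 0 := by
    intro k
    have := Complex.nonneg_iff.mp (diag_nn hA k)
    exact ⟨this.1, this.2.symm⟩
  have hsum := diag_re_sum ht
  rcases eq_or_ne i j with rfl | hij
  · have hle : (A i i).re ≤ 1 := by
      rw [← hsum]
      exact Finset.single_le_sum (fun k _ => (hdr k).1) (Finset.mem_univ i)
    have : A i i = ((A i i).re : ℂ) := by
      apply Complex.ext <;> simp [(hdr i).2]
    rw [this]
    rw [Complex.norm_real, Real.norm_eq_abs, abs_of_nonneg (hdr i).1]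
    exact hle
  · have h2 := offdiag_bound hA hij
    have hle : (A i i).re + (A j j).re ≤ 1 := by
      rw [← hsum]
      have : ({i, j} : Finset (Fin d)) ⊆ Finset.univ := Finset.subset_univ _
      calc (A i i).re + (A j j).re = ∑ k ∈ ({i, j} : Finset (Fin d)), (A k k).re := by
            rw [Finset.sum_pair hij]
        _ ≤ ∑ k : Fin d, (A k k).re :=
            Finset.sum_le_sum_of_subset_of_nonneg this (fun k _ _ => (hdr k).1)
    nlinarith [norm_nonneg (A i j)]

def DensSet (d : ℕ) : Set (Matrix (Fin d) (Fin d) ℂ) :=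
  {ρ | ρ.PosSemidef ∧ ρ.trace = 1}

lemma isClosed_dens (d : ℕ) : IsClosed (DensSet d) := by
  have h1 : IsClosed {ρ : Matrix (Fin d) (Fin d) ℂ | ρ.IsHermitian} :=
    isClosed_eq continuous_id.matrix_conjTranspose continuous_id
  have h2 : IsClosed {ρ : Matrix (Fin d) (Fin d) ℂ | ρ.trace = 1} :=
    isClosed_eq continuous_id.matrix_trace continuous_const
  have hcone : IsClosed {z : ℂ | 0 ≤ z} := by
    have : {z : ℂ | 0 ≤ z} = Complex.re ⁻¹' Set.Ici 0 ∩ Complex.im ⁻¹' {0} := by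
      ext z
      simp [Complex.nonneg_iff, eq_comm]
    rw [this]
    exact (isClosed_Ici.preimage Complex.continuous_re).inter
      ((isClosed_singleton).preimage Complex.continuous_im)
  have h3 : ∀ x : Fin d → ℂ, IsClosed {ρ : Matrix (Fin d) (Fin d) ℂ | 0 ≤ star x ⬝ᵥ ρ *ᵥ x} := by
    intro x
    have hc : Continuous fun ρ : Matrix (Fin d) (Fin d) ℂ => star x ⬝ᵥ ρ *ᵥ x :=
      continuous_const.dotProduct (continuous_id.matrix_mulVec continuous_const)
    exact hcone.preimage hc
  have : DensSet d = ({ρ : Matrix (Fin d) (Fin d) ℂ | ρ.IsHermitian}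
      ∩ ⋂ x : Fin d → ℂ, {ρ | 0 ≤ star x ⬝ᵥ ρ *ᵥ x}) ∩ {ρ | ρ.trace = 1} := by
    ext ρ
    simp only [DensSet, Set.mem_setOf_eq, Set.mem_inter_iff, Set.mem_iInter, Matrix.posSemidef_iff_dotProduct_mulVec]

  rw [this]
  exact ((h1.inter (isClosed_iInter h3)).inter h2)

lemma isCompact_dens (d : ℕ) : IsCompact (DensSet d) := by
  have hKeq : {ρ : Matrix (Fin d) (Fin d) ℂ | ∀ i j, ρ i j ∈ Metric.closedBall (0:ℂ) 1}
      = Set.univ.pi (fun _ : Fin d => Set.univ.pi fun _ : Fin d => Metric.closedBall (0:ℂ) 1) := by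
    ext ρ
    constructor
    · intro h
      refine Set.mem_univ_pi.mpr fun i => Set.mem_univ_pi.mpr fun j => ?_
      simpa [Metric.mem_closedBall, dist_zero_right] using h i j
    · intro h i j
      have := Set.mem_univ_pi.mp (Set.mem_univ_pi.mp h i) j
      simpa [Metric.mem_closedBall, dist_zero_right] using this
  have hK : IsCompact {ρ : Matrix (Fin d) (Fin d) ℂ | ∀ i j, ρ i j ∈ Metric.closedBall (0:ℂ) 1} := by
    rw [hKeq]
    exact isCompact_univ_pi fun _ => isCompact_univ_pi fun _ => isCompact_closedBall _ _
  apply hK.of_isClosed_subset (isClosed_dens d)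
  intro ρ hρ i j
  simpa using entry_norm_le hρ.1 hρ.2 i j

end Stmt12Aux

open Stmt12Aux in

theorem stmt_12 {d : ℕ} (hd : 0 < d)
    (T : Matrix (Fin d) (Fin d) ℂ →ₗ[ℂ] Matrix (Fin d) (Fin d) ℂ)
    (hT : ∀ A, (T A).trace = A.trace)
    (hpos : ∀ A : Matrix (Fin d) (Fin d) ℂ, A.PosSemidef → (T A).PosSemidef) :
    (∀ ρ : Matrix (Fin d) (Fin d) ℂ, ρ.PosSemidef → ρ.trace = 1 →
        (T ρ).PosSemidef ∧ (T ρ).trace = 1) ∧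
    (∃ ρ : Matrix (Fin d) (Fin d) ℂ, ρ.PosSemidef ∧ ρ.trace = 1 ∧ T ρ = ρ) := by
  refine ⟨fun ρ h1 h2 => ⟨hpos ρ h1, (hT ρ).trans h2⟩, ?_⟩
  -- initial density matrix
  set ρ₀ : Matrix (Fin d) (Fin d) ℂ := (((d : ℝ)⁻¹ : ℝ) : ℂ) • (1 : Matrix (Fin d) (Fin d) ℂ)
    with hρ₀def
  have hdR : (0:ℝ) < (d:ℝ) := by exact_mod_cast hd
  have hρ₀ : ρ₀ ∈ DensSet d := by
    constructor
    · exact psd_smul Matrix.PosSemidef.one (inv_nonneg.2 hdR.le)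
    · rw [hρ₀def, Matrix.trace_smul, Matrix.trace_one]
      simp only [smul_eq_mul]
      rw [← Complex.ofReal_natCast, ← Complex.ofReal_mul, Fintype.card_fin,
        inv_mul_cancel₀ hdR.ne']
      simp
  -- iterates
  set g : ℕ → Matrix (Fin d) (Fin d) ℂ := fun k => (T ^ k) ρ₀ with hg
  have hgS : ∀ k, g k ∈ DensSet d := by
    intro k
    induction k with
    | zero => simpa [hg] using hρ₀
    | succ k ih =>
      have : g (k + 1) = T (g k) := by
        rw [hg]
        simp only
        rw [pow_succ']
        rfl
      rw [this]
      exact ⟨hpos _ ih.1, (hT _).trans ih.2⟩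
  have hgT : ∀ k, T (g k) = g (k + 1) := by
    intro k
    rw [hg]
    simp only
    rw [pow_succ']
    rfl
  -- Cesàro means
  set f : ℕ → Matrix (Fin d) (Fin d) ℂ :=
    fun n => ((((n : ℝ) + 1)⁻¹ : ℝ) : ℂ) • ∑ k ∈ Finset.range (n + 1), g k with hf
  have hnR : ∀ n : ℕ, (0:ℝ) < (n : ℝ) + 1 := fun n => by positivity
  have hsumpsd : ∀ n : ℕ, (∑ k ∈ Finset.range (n + 1), g k).PosSemidef := by
    intro n
    induction n with
    | zero => simpa using (hgS 0).1
    | succ n ih =>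
      rw [Finset.sum_range_succ]
      exact psd_add ih (hgS (n+1)).1
  have hfS : ∀ n, f n ∈ DensSet d := by
    intro n
    constructor
    · exact psd_smul (hsumpsd n) (inv_nonneg.2 (hnR n).le)
    · rw [hf]
      simp only
      rw [Matrix.trace_smul, Matrix.trace_sum]
      have : ∀ k ∈ Finset.range (n+1), (g k).trace = 1 := fun k _ => (hgS k).2
      rw [Finset.sum_congr rfl this]
      simp only [Finset.sum_const, Finset.card_range, nsmul_eq_mul, smul_eq_mul, mul_one]
      rw [← Complex.ofReal_natCast, ← Complex.ofReal_mul]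
      have hcast : ((n + 1 : ℕ) : ℝ) = (n : ℝ) + 1 := by push_cast; ring
      rw [hcast, inv_mul_cancel₀ (hnR n).ne']
      simp
  -- the error term
  have herr : ∀ n, T (f n) - f n
      = ((((n : ℝ) + 1)⁻¹ : ℝ) : ℂ) • (g (n + 1) - g 0) := by
    intro n
    rw [hf]
    simp only
    rw [_root_.map_smul, map_sum]
    rw [← smul_sub]
    congr 1
    rw [← Finset.sum_sub_distrib]
    calc ∑ k ∈ Finset.range (n+1), (T (g k) - g k)
        = ∑ k ∈ Finset.range (n+1), (g (k+1) - g k) := by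
          refine Finset.sum_congr rfl fun k _ => by rw [hgT k]
      _ = g (n+1) - g 0 := Finset.sum_range_sub g (n+1)
  -- error term tends to 0
  have herr0 : Tendsto (fun n => T (f n) - f n) atTop (𝓝 0) := by
    have : Tendsto (fun n => (fun i j => (T (f n) - f n) i j) : ℕ → Fin d → Fin d → ℂ) atTop
        (𝓝 (fun _ _ => 0)) := by
      rw [tendsto_pi_nhds]
      intro i
      rw [tendsto_pi_nhds]
      intro j
      have hb : Tendsto (fun n : ℕ => 2 * (1 / ((n:ℝ)+1))) atTop (𝓝 0) := by
        simpa using tendsto_one_div_add_atTop_nhds_zero_nat.const_mul (2:ℝ)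
      refine squeeze_zero_norm (fun n => ?_) hb
      rw [herr n]
      have h1 : ‖g (n+1) i j - g 0 i j‖ ≤ 2 := by
        calc ‖g (n+1) i j - g 0 i j‖ ≤ ‖g (n+1) i j‖ + ‖g 0 i j‖ := norm_sub_le _ _
          _ ≤ 1 + 1 := add_le_add (entry_norm_le (hgS (n+1)).1 (hgS (n+1)).2 i j)
              (entry_norm_le (hgS 0).1 (hgS 0).2 i j)
          _ = 2 := by norm_num
      have hsm : ((((n : ℝ) + 1)⁻¹ : ℝ) : ℂ) • (g (n + 1) - g 0) = fun i j =>
          ((((n : ℝ) + 1)⁻¹ : ℝ) : ℂ) * (g (n+1) i j - g 0 i j) := by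
        funext i j
        simp [Matrix.smul_apply, Matrix.sub_apply, smul_eq_mul]
      rw [hsm]
      simp only
      rw [norm_mul, Complex.norm_real, Real.norm_eq_abs, abs_of_nonneg (inv_nonneg.2 (hnR n).le),
        one_div]
      calc ((n:ℝ)+1)⁻¹ * ‖g (n+1) i j - g 0 i j‖ ≤ ((n:ℝ)+1)⁻¹ * 2 :=
            mul_le_mul_of_nonneg_left h1 (inv_nonneg.2 (hnR n).le)
        _ = 2 * ((n:ℝ)+1)⁻¹ := by ring
    exact this
  -- extract convergent subsequence
  haveI : FirstCountableTopology (Matrix (Fin d) (Fin d) ℂ) :=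
    (inferInstance : FirstCountableTopology (Fin d → Fin d → ℂ))
  obtain ⟨a, haS, φ, hφ, hlim⟩ := (isCompact_dens d).tendsto_subseq hfS
  refine ⟨a, haS.1, haS.2, ?_⟩
  have hTcont : Continuous T := T.continuous_of_finiteDimensional
  have h1 : Tendsto (fun n => T (f (φ n))) atTop (𝓝 (T a)) :=
    (hTcont.tendsto a).comp hlim
  have h2 : Tendsto (fun n => T (f (φ n))) atTop (𝓝 a) := by
    have he : Tendsto (fun n => T (f (φ n)) - f (φ n)) atTop (𝓝 0) :=
      herr0.comp hφ.tendsto_atTop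
    have := he.add hlim
    simpa using this
  exact tendsto_nhds_unique h1 h2
end
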